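/- Let A and B be square matrices over ℕ indexed by V and W, with block matrices C = [[A,0],[0,B]] and D = [[0,R],[S,0]]. If φ: E_C × E_D → E_D × E_C and ψ: E_D² → E_C^m are path isomorphisms with components (φ_R, φ_S) and (ψ_A, ψ_B) respectively, then the single compatibility condition φ^(m) = (id_D × ψ)∘(ψ⁻¹ × id_D), where φ^(m) := (φ × id_{C^{m-1}})∘(id_C × φ × id_{C^{m-2}})∘⋯∘(id_{C^{m-1}} × φ), holds if and only if both componentwise compatibility conditions φ_R^(m) = (id_R × ψ_B)∘(ψ_A⁻¹ × id_R) and φ_S^(m) = (id_S × ψ_A)∘(ψ_B⁻¹ × id_S) hold. Hence A and B are compatibly shift equivalent with lag m via R and S if and only if there exist φ and ψ as above satisfying φ^(m) = (id_D × ψ)∘(ψ⁻¹ × id_D). -/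

import Mathlib

universe u

/-- The edge set of a matrix `F` over `ℕ`: `E_F = { (v,w,n) : n < F v w }`. -/
def Edge {α β : Type u} (F : Matrix α β ℕ) : Type u :=
  {p : α × β × ℕ // p.2.2 < F p.1 p.2.1}

/-- Source of an edge. -/
def Edge.src {α β : Type u} {F : Matrix α β ℕ} (e : Edge F) : α := e.val.1

/-- Range of an edge. -/
def Edge.rng {α β : Type u} {F : Matrix α β ℕ} (e : Edge F) : β := e.val.2.1

/-- An abstract edge system: a set of "edges" with source and range maps. -/
structure EdgeSys (α β : Type u) : Type (u + 1) where
  E : Type u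
  src : E → α
  rng : E → β

/-- The edge system of a matrix over `ℕ`. -/
def esys {α β : Type u} (F : Matrix α β ℕ) : EdgeSys α β :=
  ⟨Edge F, Edge.src, Edge.rng⟩

/-- The product of edge systems: composable pairs of edges. -/
def EdgeSys.prod {α β γ : Type u} (X : EdgeSys α β) (Y : EdgeSys β γ) : EdgeSys α γ :=
  ⟨{p : X.E × Y.E // X.rng p.1 = Y.src p.2},
   fun p => X.src p.val.1, fun p => Y.rng p.val.2⟩

/-- Powers of an edge system: paths of a given length (`pow 0` = vertices). -/
def EdgeSys.pow {α : Type u} (X : EdgeSys α α) : ℕ → EdgeSys α α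
  | 0 => ⟨α, id, id⟩
  | 1 => X
  | n + 2 => X.prod (X.pow (n + 1))

/-- A path isomorphism between edge systems: a source- and range-preserving
bijection. -/
structure PIso {α β : Type u} (X Y : EdgeSys α β) : Type u where
  e : X.E ≃ Y.E
  src_eq : ∀ x, Y.src (e x) = X.src x
  rng_eq : ∀ x, Y.rng (e x) = X.rng x

/-- Identity path isomorphism. -/
def PIso.refl {α β : Type u} (X : EdgeSys α β) : PIso X X :=
  ⟨Equiv.refl _, fun _ => rfl, fun _ => rfl⟩

/-- Inverse of a path isomorphism. -/
def PIso.symm {α β : Type u} {X Y : EdgeSys α β} (f : PIso X Y) : PIso Y X :=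
  ⟨f.e.symm,
   fun y => by rw [← f.src_eq (f.e.symm y), Equiv.apply_symm_apply],
   fun y => by rw [← f.rng_eq (f.e.symm y), Equiv.apply_symm_apply]⟩

/-- Composition of path isomorphisms. -/
def PIso.trans {α β : Type u} {X Y Z : EdgeSys α β} (f : PIso X Y) (g : PIso Y Z) :
    PIso X Z :=
  ⟨f.e.trans g.e,
   fun x => by rw [Equiv.trans_apply, g.src_eq, f.src_eq],
   fun x => by rw [Equiv.trans_apply, g.rng_eq, f.rng_eq]⟩

/-- Horizontal product `f × g` of path isomorphisms. -/
def PIso.hprod {α β γ : Type u} {X X' : EdgeSys α β} {Y Y' : EdgeSys β γ}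
    (f : PIso X X') (g : PIso Y Y') : PIso (X.prod Y) (X'.prod Y') where
  e := Equiv.subtypeEquiv (f.e.prodCongr g.e) (by
        intro p
        simp only [Equiv.prodCongr_apply, Prod.map]
        rw [f.rng_eq, g.src_eq])
  src_eq := fun x => f.src_eq x.val.1
  rng_eq := fun x => g.rng_eq x.val.2

/-- The associator path isomorphism `(X × Y) × Z ≅ X × (Y × Z)`. -/
def EdgeSys.assoc {α β γ δ : Type u} (X : EdgeSys α β) (Y : EdgeSys β γ)
    (Z : EdgeSys γ δ) : PIso ((X.prod Y).prod Z) (X.prod (Y.prod Z)) where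
  e := { toFun := fun p =>
            ⟨(p.val.1.val.1, ⟨(p.val.1.val.2, p.val.2), p.property⟩), p.val.1.property⟩
         invFun := fun q =>
            ⟨(⟨(q.val.1, q.val.2.val.1), q.property⟩, q.val.2.val.2), q.val.2.property⟩
         left_inv := fun p => rfl
         right_inv := fun q => rfl }
  src_eq := fun _ => rfl
  rng_eq := fun _ => rfl

/-- The iterated path isomorphism `φ^(m)` (with `m = k + 1`), moving an edge of
`R` past `m` edges: `φ^(m) = (φ × id) ∘ (id × φ × id) ∘ ⋯ ∘ (id × φ)`. -/
def PIso.iter {α β : Type u} {X : EdgeSys α α} {Y : EdgeSys β β} {R : EdgeSys α β}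
    (φ : PIso (X.prod R) (R.prod Y)) :
    (k : ℕ) → PIso ((X.pow (k + 1)).prod R) (R.prod (Y.pow (k + 1)))
  | 0 => φ
  | k + 1 =>
      (EdgeSys.assoc X (X.pow (k + 1)) R).trans
        (((PIso.refl X).hprod (φ.iter k)).trans
          ((EdgeSys.assoc X R (Y.pow (k + 1))).symm.trans
            ((φ.hprod (PIso.refl (Y.pow (k + 1)))).trans
              (EdgeSys.assoc R Y (Y.pow (k + 1))))))

/-- The canonical path isomorphism `X^(k+1) × X ≅ X^(k+2)`. -/
def EdgeSys.powShift {α : Type u} (X : EdgeSys α α) :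
    (k : ℕ) → PIso ((X.pow (k + 1)).prod X) (X.pow (k + 2))
  | 0 => PIso.refl (X.prod X)
  | k + 1 =>
      (EdgeSys.assoc X (X.pow (k + 1)) X).trans
        ((PIso.refl X).hprod (X.powShift k))

/-- A compatible shift equivalence of lag `k + 1` between `A` and `B`, via the
matrices `R` and `S`: path isomorphisms `φ_R, φ_S, ψ_A, ψ_B` satisfying
`φ_R^(m) = (id_R × ψ_B) ∘ (ψ_A⁻¹ × id_R)` and
`φ_S^(m) = (id_S × ψ_A) ∘ (ψ_B⁻¹ × id_S)` (with `m = k + 1`). -/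
structure CompatSE {V W : Type u} (A : Matrix V V ℕ) (B : Matrix W W ℕ)
    (R : Matrix V W ℕ) (S : Matrix W V ℕ) (k : ℕ) : Type u where
  φR : PIso ((esys A).prod (esys R)) ((esys R).prod (esys B))
  φS : PIso ((esys B).prod (esys S)) ((esys S).prod (esys A))
  ψA : PIso ((esys R).prod (esys S)) ((esys A).pow (k + 1))
  ψB : PIso ((esys S).prod (esys R)) ((esys B).pow (k + 1))
  compatR : φR.iter k =
    (ψA.symm.hprod (PIso.refl (esys R))).trans
      ((EdgeSys.assoc (esys R) (esys S) (esys R)).trans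
        ((PIso.refl (esys R)).hprod ψB))
  compatS : φS.iter k =
    (ψB.symm.hprod (PIso.refl (esys S))).trans
      ((EdgeSys.assoc (esys S) (esys R) (esys S)).trans
        ((PIso.refl (esys S)).hprod ψA))

/-- A matrix is essential if it has no zero rows and no zero columns. -/
def Essential {V W : Type u} (M : Matrix V W ℕ) : Prop :=
  (∀ v, ∃ w, M v w ≠ 0) ∧ (∀ w, ∃ v, M v w ≠ 0)

/-- A morphism of edge systems over vertex maps `f` and `g`: an edge map
intertwining sources and ranges. -/
structure PMor {α β α' β' : Type u} (X : EdgeSys α β) (Y : EdgeSys α' β')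
    (f : α → α') (g : β → β') : Type u where
  map : X.E → Y.E
  src_eq : ∀ x, Y.src (map x) = f (X.src x)
  rng_eq : ∀ x, Y.rng (map x) = g (X.rng x)

/-- Product of edge system morphisms. -/
def PMor.mprod {α β γ α' β' γ' : Type u} {X : EdgeSys α β} {Y : EdgeSys β γ}
    {X' : EdgeSys α' β'} {Y' : EdgeSys β' γ'} {f : α → α'} {g : β → β'} {h : γ → γ'}
    (F : PMor X X' f g) (G : PMor Y Y' g h) : PMor (X.prod Y) (X'.prod Y') f h where
  map p := ⟨(F.map p.val.1, G.map p.val.2), by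
    rw [F.rng_eq, G.src_eq, p.property]⟩
  src_eq p := F.src_eq p.val.1
  rng_eq p := G.rng_eq p.val.2

/-- Powers of an edge system morphism, acting on paths. -/
def PMor.mpow {α α' : Type u} {X : EdgeSys α α} {Y : EdgeSys α' α'} {f : α → α'}
    (F : PMor X Y f f) : (m : ℕ) → PMor (X.pow m) (Y.pow m) f f
  | 0 => ⟨f, fun _ => rfl, fun _ => rfl⟩
  | 1 => F
  | m + 2 => F.mprod (F.mpow (m + 1))

/-- The block matrix `C = [[A,0],[0,B]]`. -/
def Cmat {V W : Type u} (A : Matrix V V ℕ) (B : Matrix W W ℕ) :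
    Matrix (V ⊕ W) (V ⊕ W) ℕ := Matrix.fromBlocks A 0 0 B

/-- The block matrix `D = [[0,R],[S,0]]`. -/
def Dmat {V W : Type u} (R : Matrix V W ℕ) (S : Matrix W V ℕ) :
    Matrix (V ⊕ W) (V ⊕ W) ℕ := Matrix.fromBlocks 0 R S 0

/-- Embedding of the edges of `A` into the edges of `C = [[A,0],[0,B]]`. -/
def embA {V W : Type u} (A : Matrix V V ℕ) (B : Matrix W W ℕ) :
    PMor (esys A) (esys (Cmat A B)) Sum.inl Sum.inl where
  map a := ⟨(Sum.inl a.val.1, Sum.inl a.val.2.1, a.val.2.2), by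
    simpa [Cmat] using a.property⟩
  src_eq _ := rfl
  rng_eq _ := rfl

/-- Embedding of the edges of `B` into the edges of `C = [[A,0],[0,B]]`. -/
def embB {V W : Type u} (A : Matrix V V ℕ) (B : Matrix W W ℕ) :
    PMor (esys B) (esys (Cmat A B)) Sum.inr Sum.inr where
  map b := ⟨(Sum.inr b.val.1, Sum.inr b.val.2.1, b.val.2.2), by
    simpa [Cmat] using b.property⟩
  src_eq _ := rfl
  rng_eq _ := rfl

/-- Embedding of the edges of `R` into the edges of `D = [[0,R],[S,0]]`. -/
def embR {V W : Type u} (R : Matrix V W ℕ) (S : Matrix W V ℕ) :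
    PMor (esys R) (esys (Dmat R S)) Sum.inl Sum.inr where
  map r := ⟨(Sum.inl r.val.1, Sum.inr r.val.2.1, r.val.2.2), by
    simpa [Dmat] using r.property⟩
  src_eq _ := rfl
  rng_eq _ := rfl

/-- Embedding of the edges of `S` into the edges of `D = [[0,R],[S,0]]`. -/
def embS {V W : Type u} (R : Matrix V W ℕ) (S : Matrix W V ℕ) :
    PMor (esys S) (esys (Dmat R S)) Sum.inr Sum.inl where
  map s := ⟨(Sum.inr s.val.1, Sum.inl s.val.2.1, s.val.2.2), by
    simpa [Dmat] using s.property⟩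
  src_eq _ := rfl
  rng_eq _ := rfl

/-- The combined compatibility condition for block matrices: with `m = k + 1`,
`φ^(m) = (id_D × ψ) ∘ (ψ⁻¹ × id_D)`. -/
def CombinedCompat {V W : Type} (A : Matrix V V ℕ) (B : Matrix W W ℕ)
    (R : Matrix V W ℕ) (S : Matrix W V ℕ) (k : ℕ)
    (φ : PIso ((esys (Cmat A B)).prod (esys (Dmat R S)))
          ((esys (Dmat R S)).prod (esys (Cmat A B))))
    (ψ : PIso ((esys (Dmat R S)).pow 2) ((esys (Cmat A B)).pow (k + 1))) : Prop :=
  φ.iter k =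
    (ψ.symm.hprod (PIso.refl (esys (Dmat R S)))).trans
      ((EdgeSys.assoc (esys (Dmat R S)) (esys (Dmat R S)) (esys (Dmat R S))).trans
        ((PIso.refl (esys (Dmat R S))).hprod ψ))

section Generic

theorem PIso.ext' {α β : Type u} {X Y : EdgeSys α β} {f g : PIso X Y}
    (h : ∀ x, f.e x = g.e x) : f = g := by
  have he : f.e = g.e := Equiv.ext h
  cases f; cases g; cases he; rfl

variable {α β γ δ α' β' γ' δ' : Type u}

theorem hprod_nat {X X1 : EdgeSys α β} {Y Y1 : EdgeSys β γ}
    {X' X1' : EdgeSys α' β'} {Y' Y1' : EdgeSys β' γ'}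
    {f : α → α'} {g : β → β'} {h : γ → γ'}
    (p : PIso X X1) (q : PIso Y Y1) (p' : PIso X' X1') (q' : PIso Y' Y1')
    (F : PMor X X' f g) (F1 : PMor X1 X1' f g)
    (G : PMor Y Y' g h) (G1 : PMor Y1 Y1' g h)
    (hp : ∀ x, p'.e (F.map x) = F1.map (p.e x))
    (hq : ∀ y, q'.e (G.map y) = G1.map (q.e y)) :
    ∀ z, (p'.hprod q').e ((F.mprod G).map z) = (F1.mprod G1).map ((p.hprod q).e z) := by
  intro z
  exact Subtype.ext (Prod.ext (hp z.val.1) (hq z.val.2))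

theorem assoc_nat {X : EdgeSys α β} {Y : EdgeSys β γ} {Z : EdgeSys γ δ}
    {X' : EdgeSys α' β'} {Y' : EdgeSys β' γ'} {Z' : EdgeSys γ' δ'}
    {f : α → α'} {g : β → β'} {h : γ → γ'} {i : δ → δ'}
    (F : PMor X X' f g) (G : PMor Y Y' g h) (H : PMor Z Z' h i) :
    ∀ z, (EdgeSys.assoc X' Y' Z').e (((F.mprod G).mprod H).map z)
      = (F.mprod (G.mprod H)).map ((EdgeSys.assoc X Y Z).e z) :=
  fun _ => Subtype.ext rfl

theorem assoc_symm_nat {X : EdgeSys α β} {Y : EdgeSys β γ} {Z : EdgeSys γ δ}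
    {X' : EdgeSys α' β'} {Y' : EdgeSys β' γ'} {Z' : EdgeSys γ' δ'}
    {f : α → α'} {g : β → β'} {h : γ → γ'} {i : δ → δ'}
    (F : PMor X X' f g) (G : PMor Y Y' g h) (H : PMor Z Z' h i) :
    ∀ z, (EdgeSys.assoc X' Y' Z').symm.e ((F.mprod (G.mprod H)).map z)
      = ((F.mprod G).mprod H).map ((EdgeSys.assoc X Y Z).symm.e z) :=
  fun _ => Subtype.ext rfl

theorem symm_nat {X Y : EdgeSys α β} {X' Y' : EdgeSys α' β'} {f : α → α'} {g : β → β'}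
    (p : PIso X Y) (p' : PIso X' Y') (F : PMor X X' f g) (G : PMor Y Y' f g)
    (hp : ∀ x, p'.e (F.map x) = G.map (p.e x)) :
    ∀ y, p'.symm.e (G.map y) = F.map (p.symm.e y) := by
  intro y
  apply p'.e.injective
  rw [hp (p.symm.e y)]
  show p'.e (p'.e.symm (G.map y)) = G.map (p.e (p.e.symm y))
  simp

theorem mprod_inj {X : EdgeSys α β} {Y : EdgeSys β γ}
    {X' : EdgeSys α' β'} {Y' : EdgeSys β' γ'}
    {f : α → α'} {g : β → β'} {h : γ → γ'}
    {F : PMor X X' f g} {G : PMor Y Y' g h}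
    (hF : Function.Injective F.map) (hG : Function.Injective G.map) :
    Function.Injective (F.mprod G).map := by
  intro a b hab
  have h' : (F.map a.val.1, G.map a.val.2) = (F.map b.val.1, G.map b.val.2) :=
    congrArg Subtype.val hab
  exact Subtype.ext (Prod.ext (hF (congrArg Prod.fst h')) (hG (congrArg Prod.snd h')))

theorem mpow_inj {X : EdgeSys α α} {X' : EdgeSys α' α'} {f : α → α'}
    (F : PMor X X' f f) (hf : Function.Injective f)
    (hF : Function.Injective F.map) :
    ∀ m, Function.Injective (F.mpow m).map
  | 0 => hf
  | 1 => hF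
  | (m + 2) => mprod_inj hF (mpow_inj F hf hF (m + 1))

theorem iter_nat {X : EdgeSys α α} {Y : EdgeSys β β} {Rs : EdgeSys α β}
    {X' : EdgeSys α' α'} {Y' : EdgeSys β' β'} {Rs' : EdgeSys α' β'}
    {f : α → α'} {g : β → β'}
    (F : PMor X X' f f) (G : PMor Rs Rs' f g) (H : PMor Y Y' g g)
    (φ : PIso (X.prod Rs) (Rs.prod Y)) (φ' : PIso (X'.prod Rs') (Rs'.prod Y'))
    (h : ∀ z, φ'.e ((F.mprod G).map z) = (G.mprod H).map (φ.e z)) :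
    ∀ (k : ℕ) (z : ((X.pow (k+1)).prod Rs).E),
      (φ'.iter k).e (((F.mpow (k+1)).mprod G).map z)
        = (G.mprod (H.mpow (k+1))).map ((φ.iter k).e z)
  | 0, z => h z
  | (k+1), z => by
    show (EdgeSys.assoc Rs' Y' (Y'.pow (k+1))).e
        ((φ'.hprod (PIso.refl (Y'.pow (k+1)))).e
          ((EdgeSys.assoc X' Rs' (Y'.pow (k+1))).symm.e
            (((PIso.refl X').hprod (φ'.iter k)).e
              ((EdgeSys.assoc X' (X'.pow (k+1)) Rs').e
                (((F.mprod (F.mpow (k+1))).mprod G).map z)))))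
      = _
    erw [assoc_nat F (F.mpow (k+1)) G,
        hprod_nat (PIso.refl X) (φ.iter k) (PIso.refl X') (φ'.iter k)
          F F ((F.mpow (k+1)).mprod G) (G.mprod (H.mpow (k+1)))
          (fun _ => rfl) (iter_nat F G H φ φ' h k),
        assoc_symm_nat F G (H.mpow (k+1)),
        hprod_nat φ (PIso.refl (Y.pow (k+1))) φ' (PIso.refl (Y'.pow (k+1)))
          (F.mprod G) (G.mprod H) (H.mpow (k+1)) (H.mpow (k+1))
          h (fun _ => rfl),
        assoc_nat G H (H.mpow (k+1))]
    rfl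

end Generic
section Decomp

variable {V W : Type u} (A : Matrix V V ℕ) (B : Matrix W W ℕ)
  (R : Matrix V W ℕ) (S : Matrix W V ℕ)

theorem decC (c : Edge (Cmat A B)) :
    (∃ a, c = (embA A B).map a) ∨ (∃ b, c = (embB A B).map b) := by
  obtain ⟨⟨x, y, n⟩, h⟩ := c
  match x, y with
  | Sum.inl v, Sum.inl v' =>
      exact Or.inl ⟨⟨(v, v', n), by simpa [Cmat] using h⟩, rfl⟩
  | Sum.inl v, Sum.inr w => simp [Cmat] at h
  | Sum.inr w, Sum.inl v => simp [Cmat] at h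
  | Sum.inr w, Sum.inr w' =>
      exact Or.inr ⟨⟨(w, w', n), by simpa [Cmat] using h⟩, rfl⟩

theorem decD (d : Edge (Dmat R S)) :
    (∃ r, d = (embR R S).map r) ∨ (∃ s, d = (embS R S).map s) := by
  obtain ⟨⟨x, y, n⟩, h⟩ := d
  match x, y with
  | Sum.inl v, Sum.inr w =>
      exact Or.inl ⟨⟨(v, w, n), by simpa [Dmat] using h⟩, rfl⟩
  | Sum.inl v, Sum.inl v' => simp [Dmat] at h
  | Sum.inr w, Sum.inr w' => simp [Dmat] at h
  | Sum.inr w, Sum.inl v =>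
      exact Or.inr ⟨⟨(w, v, n), by simpa [Dmat] using h⟩, rfl⟩

theorem embA_inj : Function.Injective (embA A B).map := by
  intro a b hab
  apply Subtype.ext
  have h1 : ((Sum.inl a.val.1 : V ⊕ W), (Sum.inl a.val.2.1 : V ⊕ W), a.val.2.2)
      = (Sum.inl b.val.1, Sum.inl b.val.2.1, b.val.2.2) := congrArg Subtype.val hab
  simp only [Prod.mk.injEq, Sum.inl.injEq, Sum.inr.injEq] at h1
  exact Prod.ext h1.1 (Prod.ext h1.2.1 h1.2.2)

theorem embB_inj : Function.Injective (embB A B).map := by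
  intro a b hab
  apply Subtype.ext
  have h1 : ((Sum.inr a.val.1 : V ⊕ W), (Sum.inr a.val.2.1 : V ⊕ W), a.val.2.2)
      = (Sum.inr b.val.1, Sum.inr b.val.2.1, b.val.2.2) := congrArg Subtype.val hab
  simp only [Prod.mk.injEq, Sum.inl.injEq, Sum.inr.injEq] at h1
  exact Prod.ext h1.1 (Prod.ext h1.2.1 h1.2.2)

theorem embR_inj : Function.Injective (embR R S).map := by
  intro a b hab
  apply Subtype.ext
  have h1 : ((Sum.inl a.val.1 : V ⊕ W), (Sum.inr a.val.2.1 : V ⊕ W), a.val.2.2)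
      = (Sum.inl b.val.1, Sum.inr b.val.2.1, b.val.2.2) := congrArg Subtype.val hab
  simp only [Prod.mk.injEq, Sum.inl.injEq, Sum.inr.injEq] at h1
  exact Prod.ext h1.1 (Prod.ext h1.2.1 h1.2.2)

theorem embS_inj : Function.Injective (embS R S).map := by
  intro a b hab
  apply Subtype.ext
  have h1 : ((Sum.inr a.val.1 : V ⊕ W), (Sum.inl a.val.2.1 : V ⊕ W), a.val.2.2)
      = (Sum.inr b.val.1, Sum.inl b.val.2.1, b.val.2.2) := congrArg Subtype.val hab
  simp only [Prod.mk.injEq, Sum.inl.injEq, Sum.inr.injEq] at h1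
  exact Prod.ext h1.1 (Prod.ext h1.2.1 h1.2.2)

theorem decCpow : ∀ (m : ℕ) (p : ((esys (Cmat A B)).pow m).E),
    (∃ q, p = ((embA A B).mpow m).map q) ∨ (∃ q, p = ((embB A B).mpow m).map q)
  | 0, p => by
      cases p with
      | inl v => exact Or.inl ⟨v, rfl⟩
      | inr w => exact Or.inr ⟨w, rfl⟩
  | 1, p => decC A B p
  | (m+2), p => by
      obtain ⟨⟨c, rest⟩, hcomp⟩ := p
      rcases decC A B c with ⟨a, rfl⟩ | ⟨b, rfl⟩ <;>
        rcases decCpow (m+1) rest with ⟨q, rfl⟩ | ⟨q, rfl⟩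
      · have h1 : (Sum.inl ((esys A).rng a) : V ⊕ W)
            = Sum.inl (((esys A).pow (m+1)).src q) := by
          rw [← (embA A B).rng_eq a, ← ((embA A B).mpow (m+1)).src_eq q]; exact hcomp
        exact Or.inl ⟨⟨(a, q), Sum.inl_injective h1⟩, rfl⟩
      · rw [(embA A B).rng_eq a, ((embB A B).mpow (m+1)).src_eq q] at hcomp
        simp at hcomp
      · rw [(embB A B).rng_eq b, ((embA A B).mpow (m+1)).src_eq q] at hcomp
        simp at hcomp
      · have h1 : (Sum.inr ((esys B).rng b) : V ⊕ W)
            = Sum.inr (((esys B).pow (m+1)).src q) := by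
          rw [← (embB A B).rng_eq b, ← ((embB A B).mpow (m+1)).src_eq q]; exact hcomp
        exact Or.inr ⟨⟨(b, q), Sum.inr_injective h1⟩, rfl⟩

end Decomp
section Decomp2

variable {V W : Type u} (A : Matrix V V ℕ) (B : Matrix W W ℕ)
  (R : Matrix V W ℕ) (S : Matrix W V ℕ)

/-- Decomposition of composable pairs in `C^m × D`. -/
theorem decCpowD (m : ℕ) (z : (((esys (Cmat A B)).pow m).prod (esys (Dmat R S))).E) :
    (∃ x, z = (((embA A B).mpow m).mprod (embR R S)).map x) ∨
    (∃ x, z = (((embB A B).mpow m).mprod (embS R S)).map x) := by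
  obtain ⟨⟨p, d⟩, hcomp⟩ := z
  rcases decCpow A B m p with ⟨q, rfl⟩ | ⟨q, rfl⟩ <;>
    rcases decD R S d with ⟨r, rfl⟩ | ⟨r, rfl⟩
  · refine Or.inl ⟨⟨(q, r), ?_⟩, rfl⟩
    have h1 : (Sum.inl (((esys A).pow m).rng q) : V ⊕ W) = Sum.inl ((esys R).src r) := by
      rw [← ((embA A B).mpow m).rng_eq q, ← (embR R S).src_eq r]; exact hcomp
    exact Sum.inl_injective h1
  · rw [((embA A B).mpow m).rng_eq q, (embS R S).src_eq r] at hcomp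
    simp at hcomp
  · rw [((embB A B).mpow m).rng_eq q, (embR R S).src_eq r] at hcomp
    simp at hcomp
  · refine Or.inr ⟨⟨(q, r), ?_⟩, rfl⟩
    have h1 : (Sum.inr (((esys B).pow m).rng q) : V ⊕ W) = Sum.inr ((esys S).src r) := by
      rw [← ((embB A B).mpow m).rng_eq q, ← (embS R S).src_eq r]; exact hcomp
    exact Sum.inr_injective h1

/-- Decomposition of composable pairs in `D × C^m`. -/
theorem decDpowC (m : ℕ) (z : ((esys (Dmat R S)).prod ((esys (Cmat A B)).pow m)).E) :
    (∃ x, z = ((embR R S).mprod ((embB A B).mpow m)).map x) ∨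
    (∃ x, z = ((embS R S).mprod ((embA A B).mpow m)).map x) := by
  obtain ⟨⟨d, p⟩, hcomp⟩ := z
  rcases decD R S d with ⟨r, rfl⟩ | ⟨r, rfl⟩ <;>
    rcases decCpow A B m p with ⟨q, rfl⟩ | ⟨q, rfl⟩
  · rw [(embR R S).rng_eq r, ((embA A B).mpow m).src_eq q] at hcomp
    simp at hcomp
  · refine Or.inl ⟨⟨(r, q), ?_⟩, rfl⟩
    have h1 : (Sum.inr ((esys R).rng r) : V ⊕ W) = Sum.inr (((esys B).pow m).src q) := by
      rw [← (embR R S).rng_eq r, ← ((embB A B).mpow m).src_eq q]; exact hcomp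
    exact Sum.inr_injective h1
  · refine Or.inr ⟨⟨(r, q), ?_⟩, rfl⟩
    have h1 : (Sum.inl ((esys S).rng r) : V ⊕ W) = Sum.inl (((esys A).pow m).src q) := by
      rw [← (embS R S).rng_eq r, ← ((embA A B).mpow m).src_eq q]; exact hcomp
    exact Sum.inl_injective h1
  · rw [(embS R S).rng_eq r, ((embB A B).mpow m).src_eq q] at hcomp
    simp at hcomp

/-- Decomposition of composable pairs in `D × D`. -/
theorem decDD (z : ((esys (Dmat R S)).prod (esys (Dmat R S))).E) :
    (∃ x, z = ((embR R S).mprod (embS R S)).map x) ∨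
    (∃ x, z = ((embS R S).mprod (embR R S)).map x) := by
  obtain ⟨⟨d, d'⟩, hcomp⟩ := z
  rcases decD R S d with ⟨r, rfl⟩ | ⟨r, rfl⟩ <;>
    rcases decD R S d' with ⟨r', rfl⟩ | ⟨r', rfl⟩
  · rw [(embR R S).rng_eq r, (embR R S).src_eq r'] at hcomp
    simp at hcomp
  · refine Or.inl ⟨⟨(r, r'), ?_⟩, rfl⟩
    have h1 : (Sum.inr ((esys R).rng r) : V ⊕ W) = Sum.inr ((esys S).src r') := by
      rw [← (embR R S).rng_eq r, ← (embS R S).src_eq r']; exact hcomp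
    exact Sum.inr_injective h1
  · refine Or.inr ⟨⟨(r, r'), ?_⟩, rfl⟩
    have h1 : (Sum.inl ((esys S).rng r) : V ⊕ W) = Sum.inl ((esys R).src r') := by
      rw [← (embS R S).rng_eq r, ← (embR R S).src_eq r']; exact hcomp
    exact Sum.inl_injective h1
  · rw [(embS R S).rng_eq r, (embS R S).src_eq r'] at hcomp
    simp at hcomp

end Decomp2
section Part1

variable {V W : Type} (A : Matrix V V ℕ) (B : Matrix W W ℕ)
  (R : Matrix V W ℕ) (S : Matrix W V ℕ) (k : ℕ)

theorem rhs_natA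
    (ψ : PIso ((esys (Dmat R S)).pow 2) ((esys (Cmat A B)).pow (k + 1)))
    (ψA : PIso ((esys R).prod (esys S)) ((esys A).pow (k + 1)))
    (ψB : PIso ((esys S).prod (esys R)) ((esys B).pow (k + 1)))
    (hψA : ∀ x, ψ.e (((embR R S).mprod (embS R S)).map x) =
            ((embA A B).mpow (k + 1)).map (ψA.e x))
    (hψB : ∀ x, ψ.e (((embS R S).mprod (embR R S)).map x) =
            ((embB A B).mpow (k + 1)).map (ψB.e x)) :
    ∀ x, ((ψ.symm.hprod (PIso.refl (esys (Dmat R S)))).trans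
      ((EdgeSys.assoc (esys (Dmat R S)) (esys (Dmat R S)) (esys (Dmat R S))).trans
        ((PIso.refl (esys (Dmat R S))).hprod ψ))).e
        ((((embA A B).mpow (k + 1)).mprod (embR R S)).map x)
    = ((embR R S).mprod ((embB A B).mpow (k + 1))).map
        (((ψA.symm.hprod (PIso.refl (esys R))).trans
          ((EdgeSys.assoc (esys R) (esys S) (esys R)).trans
            ((PIso.refl (esys R)).hprod ψB))).e x) := by
  intro x
  show ((PIso.refl (esys (Dmat R S))).hprod ψ).e
      ((EdgeSys.assoc (esys (Dmat R S)) (esys (Dmat R S)) (esys (Dmat R S))).e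
        ((ψ.symm.hprod (PIso.refl (esys (Dmat R S)))).e
          ((((embA A B).mpow (k + 1)).mprod (embR R S)).map x))) = _
  erw [hprod_nat ψA.symm (PIso.refl (esys R)) ψ.symm (PIso.refl (esys (Dmat R S)))
        ((embA A B).mpow (k + 1)) ((embR R S).mprod (embS R S)) (embR R S) (embR R S)
        (symm_nat ψA ψ ((embR R S).mprod (embS R S)) ((embA A B).mpow (k + 1)) hψA)
        (fun _ => rfl),
      assoc_nat (embR R S) (embS R S) (embR R S),
      hprod_nat (PIso.refl (esys R)) ψB (PIso.refl (esys (Dmat R S))) ψ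
        (embR R S) (embR R S) ((embS R S).mprod (embR R S)) ((embB A B).mpow (k + 1))
        (fun _ => rfl) hψB]
  rfl

theorem rhs_natB
    (ψ : PIso ((esys (Dmat R S)).pow 2) ((esys (Cmat A B)).pow (k + 1)))
    (ψA : PIso ((esys R).prod (esys S)) ((esys A).pow (k + 1)))
    (ψB : PIso ((esys S).prod (esys R)) ((esys B).pow (k + 1)))
    (hψA : ∀ x, ψ.e (((embR R S).mprod (embS R S)).map x) =
            ((embA A B).mpow (k + 1)).map (ψA.e x))
    (hψB : ∀ x, ψ.e (((embS R S).mprod (embR R S)).map x) =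
            ((embB A B).mpow (k + 1)).map (ψB.e x)) :
    ∀ x, ((ψ.symm.hprod (PIso.refl (esys (Dmat R S)))).trans
      ((EdgeSys.assoc (esys (Dmat R S)) (esys (Dmat R S)) (esys (Dmat R S))).trans
        ((PIso.refl (esys (Dmat R S))).hprod ψ))).e
        ((((embB A B).mpow (k + 1)).mprod (embS R S)).map x)
    = ((embS R S).mprod ((embA A B).mpow (k + 1))).map
        (((ψB.symm.hprod (PIso.refl (esys S))).trans
          ((EdgeSys.assoc (esys S) (esys R) (esys S)).trans
            ((PIso.refl (esys S)).hprod ψA))).e x) := by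
  intro x
  show ((PIso.refl (esys (Dmat R S))).hprod ψ).e
      ((EdgeSys.assoc (esys (Dmat R S)) (esys (Dmat R S)) (esys (Dmat R S))).e
        ((ψ.symm.hprod (PIso.refl (esys (Dmat R S)))).e
          ((((embB A B).mpow (k + 1)).mprod (embS R S)).map x))) = _
  erw [hprod_nat ψB.symm (PIso.refl (esys S)) ψ.symm (PIso.refl (esys (Dmat R S)))
        ((embB A B).mpow (k + 1)) ((embS R S).mprod (embR R S)) (embS R S) (embS R S)
        (symm_nat ψB ψ ((embS R S).mprod (embR R S)) ((embB A B).mpow (k + 1)) hψB)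
        (fun _ => rfl),
      assoc_nat (embS R S) (embR R S) (embS R S),
      hprod_nat (PIso.refl (esys S)) ψA (PIso.refl (esys (Dmat R S))) ψ
        (embS R S) (embS R S) ((embR R S).mprod (embS R S)) ((embA A B).mpow (k + 1))
        (fun _ => rfl) hψA]
  rfl

theorem part1
    (φ : PIso ((esys (Cmat A B)).prod (esys (Dmat R S)))
          ((esys (Dmat R S)).prod (esys (Cmat A B))))
    (ψ : PIso ((esys (Dmat R S)).pow 2) ((esys (Cmat A B)).pow (k + 1)))
    (φR : PIso ((esys A).prod (esys R)) ((esys R).prod (esys B)))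
    (φS : PIso ((esys B).prod (esys S)) ((esys S).prod (esys A)))
    (ψA : PIso ((esys R).prod (esys S)) ((esys A).pow (k + 1)))
    (ψB : PIso ((esys S).prod (esys R)) ((esys B).pow (k + 1)))
    (hφR : ∀ x, φ.e (((embA A B).mprod (embR R S)).map x) =
          ((embR R S).mprod (embB A B)).map (φR.e x))
    (hφS : ∀ x, φ.e (((embB A B).mprod (embS R S)).map x) =
          ((embS R S).mprod (embA A B)).map (φS.e x))
    (hψA : ∀ x, ψ.e (((embR R S).mprod (embS R S)).map x) =
          ((embA A B).mpow (k + 1)).map (ψA.e x))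
    (hψB : ∀ x, ψ.e (((embS R S).mprod (embR R S)).map x) =
          ((embB A B).mpow (k + 1)).map (ψB.e x)) :
    CombinedCompat A B R S k φ ψ ↔
      (φR.iter k =
        (ψA.symm.hprod (PIso.refl (esys R))).trans
          ((EdgeSys.assoc (esys R) (esys S) (esys R)).trans
            ((PIso.refl (esys R)).hprod ψB)) ∧
       φS.iter k =
        (ψB.symm.hprod (PIso.refl (esys S))).trans
          ((EdgeSys.assoc (esys S) (esys R) (esys S)).trans
            ((PIso.refl (esys S)).hprod ψA))) := by
  constructor
  · intro hcomb
    constructor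
    · apply PIso.ext'
      intro x
      apply mprod_inj (embR_inj R S)
        (mpow_inj (embB A B) Sum.inr_injective (embB_inj A B) (k + 1))
      rw [← iter_nat (embA A B) (embR R S) (embB A B) φR φ hφR k x, hcomb]
      exact rhs_natA A B R S k ψ ψA ψB hψA hψB x
    · apply PIso.ext'
      intro x
      apply mprod_inj (embS_inj R S)
        (mpow_inj (embA A B) Sum.inl_injective (embA_inj A B) (k + 1))
      rw [← iter_nat (embB A B) (embS R S) (embA A B) φS φ hφS k x, hcomb]
      exact rhs_natB A B R S k ψ ψA ψB hψA hψB x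
  · rintro ⟨h1, h2⟩
    apply PIso.ext'
    intro z
    rcases decCpowD A B R S (k + 1) z with ⟨x, rfl⟩ | ⟨x, rfl⟩
    · rw [iter_nat (embA A B) (embR R S) (embB A B) φR φ hφR k x, h1]
      exact (rhs_natA A B R S k ψ ψA ψB hψA hψB x).symm
    · rw [iter_nat (embB A B) (embS R S) (embA A B) φS φ hφS k x, h2]
      exact (rhs_natB A B R S k ψ ψA ψB hψA hψB x).symm

end Part1
section Split

variable {α β α' β' : Type u}

noncomputable def splitL (f : α ⊕ β ≃ α' ⊕ β')
    (hl : ∀ a, (f (Sum.inl a)).isLeft) (hr : ∀ b, (f (Sum.inr b)).isRight) :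
    α ≃ α' :=
  Equiv.ofBijective (fun a => (f (Sum.inl a)).getLeft (hl a)) (by
    constructor
    · intro a b hab
      have h1 : f (Sum.inl a) = Sum.inl ((f (Sum.inl a)).getLeft (hl a)) :=
        Sum.eq_left_iff_getLeft_eq.mpr ⟨hl a, rfl⟩
      have h2 : f (Sum.inl b) = Sum.inl ((f (Sum.inl b)).getLeft (hl b)) :=
        Sum.eq_left_iff_getLeft_eq.mpr ⟨hl b, rfl⟩
      have h3 : f (Sum.inl a) = f (Sum.inl b) := by rw [h1, h2]; exact congrArg Sum.inl hab
      exact Sum.inl_injective (f.injective h3)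
    · intro a'
      rcases hx : f.symm (Sum.inl a') with x | x
      · refine ⟨x, ?_⟩
        have h1 : f (Sum.inl x) = Sum.inl a' := by
          rw [← hx, Equiv.apply_symm_apply]
        obtain ⟨h, hh⟩ := Sum.eq_left_iff_getLeft_eq.mp h1
        exact hh
      · exfalso
        have h1 : Sum.inl a' = f (Sum.inr x) := by
          rw [← hx, Equiv.apply_symm_apply]
        have h2 := hr x
        rw [← h1] at h2
        simp at h2)

theorem splitL_spec (f : α ⊕ β ≃ α' ⊕ β')
    (hl : ∀ a, (f (Sum.inl a)).isLeft) (hr : ∀ b, (f (Sum.inr b)).isRight) (a : α) :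
    f (Sum.inl a) = Sum.inl (splitL f hl hr a) :=
  Sum.eq_left_iff_getLeft_eq.mpr ⟨hl a, rfl⟩

noncomputable def splitR (f : α ⊕ β ≃ α' ⊕ β')
    (hl : ∀ a, (f (Sum.inl a)).isLeft) (hr : ∀ b, (f (Sum.inr b)).isRight) :
    β ≃ β' :=
  Equiv.ofBijective (fun b => (f (Sum.inr b)).getRight (hr b)) (by
    constructor
    · intro a b hab
      have h1 : f (Sum.inr a) = Sum.inr ((f (Sum.inr a)).getRight (hr a)) :=
        Sum.eq_right_iff_getRight_eq.mpr ⟨hr a, rfl⟩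
      have h2 : f (Sum.inr b) = Sum.inr ((f (Sum.inr b)).getRight (hr b)) :=
        Sum.eq_right_iff_getRight_eq.mpr ⟨hr b, rfl⟩
      have h3 : f (Sum.inr a) = f (Sum.inr b) := by rw [h1, h2]; exact congrArg Sum.inr hab
      exact Sum.inr_injective (f.injective h3)
    · intro b'
      rcases hx : f.symm (Sum.inr b') with x | x
      · exfalso
        have h1 : Sum.inr b' = f (Sum.inl x) := by
          rw [← hx, Equiv.apply_symm_apply]
        have h2 := hl x
        rw [← h1] at h2
        simp at h2
      · refine ⟨x, ?_⟩
        have h1 : f (Sum.inr x) = Sum.inr b' := by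
          rw [← hx, Equiv.apply_symm_apply]
        obtain ⟨h, hh⟩ := Sum.eq_right_iff_getRight_eq.mp h1
        exact hh)

theorem splitR_spec (f : α ⊕ β ≃ α' ⊕ β')
    (hl : ∀ a, (f (Sum.inl a)).isLeft) (hr : ∀ b, (f (Sum.inr b)).isRight) (b : β) :
    f (Sum.inr b) = Sum.inr (splitR f hl hr b) :=
  Sum.eq_right_iff_getRight_eq.mpr ⟨hr b, rfl⟩

end Split
section Equivs

variable {V W : Type u} (A : Matrix V V ℕ) (B : Matrix W W ℕ)
  (R : Matrix V W ℕ) (S : Matrix W V ℕ)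

theorem sumCD_bij : Function.Bijective
    (Sum.elim (((embA A B).mprod (embR R S)).map) (((embB A B).mprod (embS R S)).map)) := by
  constructor
  · rintro (x | x) (y | y) h <;>
      simp only [Sum.elim_inl, Sum.elim_inr] at h
    · exact congrArg Sum.inl
        (mprod_inj (embA_inj A B) (embR_inj R S) h)
    · have hs := congrArg ((esys (Cmat A B)).prod (esys (Dmat R S))).src h
      rw [((embA A B).mprod (embR R S)).src_eq, ((embB A B).mprod (embS R S)).src_eq] at hs
      simp at hs
    · have hs := congrArg ((esys (Cmat A B)).prod (esys (Dmat R S))).src h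
      rw [((embA A B).mprod (embR R S)).src_eq, ((embB A B).mprod (embS R S)).src_eq] at hs
      simp at hs
    · exact congrArg Sum.inr
        (mprod_inj (embB_inj A B) (embS_inj R S) h)
  · intro z
    rcases decCpowD A B R S 1 z with ⟨x, rfl⟩ | ⟨x, rfl⟩
    · exact ⟨Sum.inl x, rfl⟩
    · exact ⟨Sum.inr x, rfl⟩

theorem sumDC_bij : Function.Bijective
    (Sum.elim (((embR R S).mprod (embB A B)).map) (((embS R S).mprod (embA A B)).map)) := by
  constructor
  · rintro (x | x) (y | y) h <;>
      simp only [Sum.elim_inl, Sum.elim_inr] at h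
    · exact congrArg Sum.inl
        (mprod_inj (embR_inj R S) (embB_inj A B) h)
    · have hs := congrArg ((esys (Dmat R S)).prod (esys (Cmat A B))).src h
      rw [((embR R S).mprod (embB A B)).src_eq, ((embS R S).mprod (embA A B)).src_eq] at hs
      simp at hs
    · have hs := congrArg ((esys (Dmat R S)).prod (esys (Cmat A B))).src h
      rw [((embR R S).mprod (embB A B)).src_eq, ((embS R S).mprod (embA A B)).src_eq] at hs
      simp at hs
    · exact congrArg Sum.inr
        (mprod_inj (embS_inj R S) (embA_inj A B) h)
  · intro z
    rcases decDpowC A B R S 1 z with ⟨x, rfl⟩ | ⟨x, rfl⟩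
    · exact ⟨Sum.inl x, rfl⟩
    · exact ⟨Sum.inr x, rfl⟩

theorem sumDD_bij : Function.Bijective
    (Sum.elim (((embR R S).mprod (embS R S)).map) (((embS R S).mprod (embR R S)).map)) := by
  constructor
  · rintro (x | x) (y | y) h <;>
      simp only [Sum.elim_inl, Sum.elim_inr] at h
    · exact congrArg Sum.inl
        (mprod_inj (embR_inj R S) (embS_inj R S) h)
    · have hs := congrArg ((esys (Dmat R S)).prod (esys (Dmat R S))).src h
      rw [((embR R S).mprod (embS R S)).src_eq, ((embS R S).mprod (embR R S)).src_eq] at hs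
      simp at hs
    · have hs := congrArg ((esys (Dmat R S)).prod (esys (Dmat R S))).src h
      rw [((embR R S).mprod (embS R S)).src_eq, ((embS R S).mprod (embR R S)).src_eq] at hs
      simp at hs
    · exact congrArg Sum.inr
        (mprod_inj (embS_inj R S) (embR_inj R S) h)
  · intro z
    rcases decDD R S z with ⟨x, rfl⟩ | ⟨x, rfl⟩
    · exact ⟨Sum.inl x, rfl⟩
    · exact ⟨Sum.inr x, rfl⟩

theorem sumPowC_bij (m : ℕ) : Function.Bijective
    (Sum.elim (((embA A B).mpow m).map) (((embB A B).mpow m).map)) := by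
  constructor
  · rintro (x | x) (y | y) h <;>
      simp only [Sum.elim_inl, Sum.elim_inr] at h
    · exact congrArg Sum.inl
        (mpow_inj (embA A B) Sum.inl_injective (embA_inj A B) m h)
    · have hs := congrArg ((esys (Cmat A B)).pow m).src h
      rw [((embA A B).mpow m).src_eq, ((embB A B).mpow m).src_eq] at hs
      simp at hs
    · have hs := congrArg ((esys (Cmat A B)).pow m).src h
      rw [((embA A B).mpow m).src_eq, ((embB A B).mpow m).src_eq] at hs
      simp at hs
    · exact congrArg Sum.inr
        (mpow_inj (embB A B) Sum.inr_injective (embB_inj A B) m h)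
  · intro z
    rcases decCpow A B m z with ⟨x, rfl⟩ | ⟨x, rfl⟩
    · exact ⟨Sum.inl x, rfl⟩
    · exact ⟨Sum.inr x, rfl⟩

noncomputable def eCD := Equiv.ofBijective _ (sumCD_bij A B R S)
noncomputable def eDC := Equiv.ofBijective _ (sumDC_bij A B R S)
noncomputable def eDD := Equiv.ofBijective _ (sumDD_bij R S)
noncomputable def ePowC (m : ℕ) := Equiv.ofBijective _ (sumPowC_bij A B m)

end Equivs
section Mk

variable {V W : Type u} (A : Matrix V V ℕ) (B : Matrix W W ℕ)
  (R : Matrix V W ℕ) (S : Matrix W V ℕ)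

theorem decCD (z : ((esys (Cmat A B)).prod (esys (Dmat R S))).E) :
    (∃ x, z = ((embA A B).mprod (embR R S)).map x) ∨
    (∃ x, z = ((embB A B).mprod (embS R S)).map x) := decCpowD A B R S 1 z

theorem decDC (z : ((esys (Dmat R S)).prod (esys (Cmat A B))).E) :
    (∃ x, z = ((embR R S).mprod (embB A B)).map x) ∨
    (∃ x, z = ((embS R S).mprod (embA A B)).map x) := decDpowC A B R S 1 z

noncomputable def mkφe
    (φR : PIso ((esys A).prod (esys R)) ((esys R).prod (esys B)))
    (φS : PIso ((esys B).prod (esys S)) ((esys S).prod (esys A))) :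
    ((esys (Cmat A B)).prod (esys (Dmat R S))).E ≃
      ((esys (Dmat R S)).prod (esys (Cmat A B))).E :=
  (eCD A B R S).symm.trans ((Equiv.sumCongr φR.e φS.e).trans (eDC A B R S))

theorem mkφe_specA (φR) (φS) (x : ((esys A).prod (esys R)).E) :
    mkφe A B R S φR φS (((embA A B).mprod (embR R S)).map x)
      = ((embR R S).mprod (embB A B)).map (φR.e x) := by
  show (eDC A B R S) ((Equiv.sumCongr φR.e φS.e)
      ((eCD A B R S).symm (((embA A B).mprod (embR R S)).map x))) = _
  rw [show (((embA A B).mprod (embR R S)).map x) = eCD A B R S (Sum.inl x) from rfl,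
    Equiv.symm_apply_apply]
  rfl

theorem mkφe_specB (φR) (φS) (x : ((esys B).prod (esys S)).E) :
    mkφe A B R S φR φS (((embB A B).mprod (embS R S)).map x)
      = ((embS R S).mprod (embA A B)).map (φS.e x) := by
  show (eDC A B R S) ((Equiv.sumCongr φR.e φS.e)
      ((eCD A B R S).symm (((embB A B).mprod (embS R S)).map x))) = _
  rw [show (((embB A B).mprod (embS R S)).map x) = eCD A B R S (Sum.inr x) from rfl,
    Equiv.symm_apply_apply]
  rfl

noncomputable def mkφ
    (φR : PIso ((esys A).prod (esys R)) ((esys R).prod (esys B)))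
    (φS : PIso ((esys B).prod (esys S)) ((esys S).prod (esys A))) :
    PIso ((esys (Cmat A B)).prod (esys (Dmat R S)))
      ((esys (Dmat R S)).prod (esys (Cmat A B))) where
  e := mkφe A B R S φR φS
  src_eq := by
    intro z
    rcases decCD A B R S z with ⟨x, rfl⟩ | ⟨x, rfl⟩
    · rw [mkφe_specA, ((embR R S).mprod (embB A B)).src_eq, φR.src_eq,
        ← ((embA A B).mprod (embR R S)).src_eq]
    · rw [mkφe_specB, ((embS R S).mprod (embA A B)).src_eq, φS.src_eq,
        ← ((embB A B).mprod (embS R S)).src_eq]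
  rng_eq := by
    intro z
    rcases decCD A B R S z with ⟨x, rfl⟩ | ⟨x, rfl⟩
    · rw [mkφe_specA, ((embR R S).mprod (embB A B)).rng_eq, φR.rng_eq,
        ← ((embA A B).mprod (embR R S)).rng_eq]
    · rw [mkφe_specB, ((embS R S).mprod (embA A B)).rng_eq, φS.rng_eq,
        ← ((embB A B).mprod (embS R S)).rng_eq]

variable (k : ℕ)

noncomputable def mkψe
    (ψA : PIso ((esys R).prod (esys S)) ((esys A).pow (k + 1)))
    (ψB : PIso ((esys S).prod (esys R)) ((esys B).pow (k + 1))) :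
    ((esys (Dmat R S)).pow 2).E ≃ ((esys (Cmat A B)).pow (k + 1)).E :=
  (eDD R S).symm.trans ((Equiv.sumCongr ψA.e ψB.e).trans (ePowC A B (k + 1)))

theorem mkψe_specA (ψA) (ψB) (x : ((esys R).prod (esys S)).E) :
    mkψe A B R S k ψA ψB (((embR R S).mprod (embS R S)).map x)
      = ((embA A B).mpow (k + 1)).map (ψA.e x) := by
  show (ePowC A B (k + 1)) ((Equiv.sumCongr ψA.e ψB.e)
      ((eDD R S).symm (((embR R S).mprod (embS R S)).map x))) = _
  rw [show (((embR R S).mprod (embS R S)).map x) = eDD R S (Sum.inl x) from rfl,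
    Equiv.symm_apply_apply]
  rfl

theorem mkψe_specB (ψA) (ψB) (x : ((esys S).prod (esys R)).E) :
    mkψe A B R S k ψA ψB (((embS R S).mprod (embR R S)).map x)
      = ((embB A B).mpow (k + 1)).map (ψB.e x) := by
  show (ePowC A B (k + 1)) ((Equiv.sumCongr ψA.e ψB.e)
      ((eDD R S).symm (((embS R S).mprod (embR R S)).map x))) = _
  rw [show (((embS R S).mprod (embR R S)).map x) = eDD R S (Sum.inr x) from rfl,
    Equiv.symm_apply_apply]
  rfl

noncomputable def mkψ
    (ψA : PIso ((esys R).prod (esys S)) ((esys A).pow (k + 1)))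
    (ψB : PIso ((esys S).prod (esys R)) ((esys B).pow (k + 1))) :
    PIso ((esys (Dmat R S)).pow 2) ((esys (Cmat A B)).pow (k + 1)) where
  e := mkψe A B R S k ψA ψB
  src_eq := by
    intro z
    rcases decDD R S z with ⟨x, rfl⟩ | ⟨x, rfl⟩
    · rw [mkψe_specA, ((embA A B).mpow (k + 1)).src_eq, ψA.src_eq]
      exact (((embR R S).mprod (embS R S)).src_eq x).symm
    · rw [mkψe_specB, ((embB A B).mpow (k + 1)).src_eq, ψB.src_eq]
      exact (((embS R S).mprod (embR R S)).src_eq x).symm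
  rng_eq := by
    intro z
    rcases decDD R S z with ⟨x, rfl⟩ | ⟨x, rfl⟩
    · rw [mkψe_specA, ((embA A B).mpow (k + 1)).rng_eq, ψA.rng_eq]
      exact (((embR R S).mprod (embS R S)).rng_eq x).symm
    · rw [mkψe_specB, ((embB A B).mpow (k + 1)).rng_eq, ψB.rng_eq]
      exact (((embS R S).mprod (embR R S)).rng_eq x).symm

end Mk
section Ext

variable {V W : Type u} (A : Matrix V V ℕ) (B : Matrix W W ℕ)
  (R : Matrix V W ℕ) (S : Matrix W V ℕ)

noncomputable def gφ
    (φ : PIso ((esys (Cmat A B)).prod (esys (Dmat R S)))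
          ((esys (Dmat R S)).prod (esys (Cmat A B)))) :
    (((esys A).prod (esys R)).E ⊕ ((esys B).prod (esys S)).E) ≃
      (((esys R).prod (esys B)).E ⊕ ((esys S).prod (esys A)).E) :=
  (eCD A B R S).trans (φ.e.trans (eDC A B R S).symm)

theorem gφ_left (φ) (x : ((esys A).prod (esys R)).E) :
    ((gφ A B R S φ) (Sum.inl x)).isLeft := by
  rcases hy : (gφ A B R S φ) (Sum.inl x) with y | y
  · rfl
  · exfalso
    have h2 : (eDC A B R S).symm (φ.e (((embA A B).mprod (embR R S)).map x))
        = Sum.inr y := hy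
    have h3 := congrArg (eDC A B R S) h2
    rw [Equiv.apply_symm_apply] at h3
    have h1 : φ.e (((embA A B).mprod (embR R S)).map x)
        = ((embS R S).mprod (embA A B)).map y := h3
    have h4 := congrArg ((esys (Dmat R S)).prod (esys (Cmat A B))).src h1
    rw [φ.src_eq, ((embA A B).mprod (embR R S)).src_eq,
      ((embS R S).mprod (embA A B)).src_eq] at h4
    simp at h4

theorem gφ_right (φ) (x : ((esys B).prod (esys S)).E) :
    ((gφ A B R S φ) (Sum.inr x)).isRight := by
  rcases hy : (gφ A B R S φ) (Sum.inr x) with y | y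
  · exfalso
    have h2 : (eDC A B R S).symm (φ.e (((embB A B).mprod (embS R S)).map x))
        = Sum.inl y := hy
    have h3 := congrArg (eDC A B R S) h2
    rw [Equiv.apply_symm_apply] at h3
    have h1 : φ.e (((embB A B).mprod (embS R S)).map x)
        = ((embR R S).mprod (embB A B)).map y := h3
    have h4 := congrArg ((esys (Dmat R S)).prod (esys (Cmat A B))).src h1
    rw [φ.src_eq, ((embB A B).mprod (embS R S)).src_eq,
      ((embR R S).mprod (embB A B)).src_eq] at h4
    simp at h4
  · rfl

theorem extφR_espec (φ) (x : ((esys A).prod (esys R)).E) :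
    φ.e (((embA A B).mprod (embR R S)).map x)
      = ((embR R S).mprod (embB A B)).map
          (splitL (gφ A B R S φ) (gφ_left A B R S φ) (gφ_right A B R S φ) x) := by
  have h2 : (eDC A B R S).symm (φ.e (((embA A B).mprod (embR R S)).map x))
      = Sum.inl (splitL (gφ A B R S φ) (gφ_left A B R S φ) (gφ_right A B R S φ) x) :=
    splitL_spec (gφ A B R S φ) (gφ_left A B R S φ) (gφ_right A B R S φ) x
  have h3 := congrArg (eDC A B R S) h2
  rw [Equiv.apply_symm_apply] at h3
  exact h3

theorem extφS_espec (φ) (x : ((esys B).prod (esys S)).E) :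
    φ.e (((embB A B).mprod (embS R S)).map x)
      = ((embS R S).mprod (embA A B)).map
          (splitR (gφ A B R S φ) (gφ_left A B R S φ) (gφ_right A B R S φ) x) := by
  have h2 : (eDC A B R S).symm (φ.e (((embB A B).mprod (embS R S)).map x))
      = Sum.inr (splitR (gφ A B R S φ) (gφ_left A B R S φ) (gφ_right A B R S φ) x) :=
    splitR_spec (gφ A B R S φ) (gφ_left A B R S φ) (gφ_right A B R S φ) x
  have h3 := congrArg (eDC A B R S) h2
  rw [Equiv.apply_symm_apply] at h3
  exact h3

noncomputable def extφR (φ : PIso ((esys (Cmat A B)).prod (esys (Dmat R S)))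
          ((esys (Dmat R S)).prod (esys (Cmat A B)))) : PIso ((esys A).prod (esys R)) ((esys R).prod (esys B)) where
  e := splitL (gφ A B R S φ) (gφ_left A B R S φ) (gφ_right A B R S φ)
  src_eq := by
    intro x
    have h4 := congrArg ((esys (Dmat R S)).prod (esys (Cmat A B))).src
      (extφR_espec A B R S φ x)
    rw [φ.src_eq, ((embA A B).mprod (embR R S)).src_eq,
      ((embR R S).mprod (embB A B)).src_eq] at h4
    exact (Sum.inl_injective h4).symm
  rng_eq := by
    intro x
    have h4 := congrArg ((esys (Dmat R S)).prod (esys (Cmat A B))).rng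
      (extφR_espec A B R S φ x)
    rw [φ.rng_eq, ((embA A B).mprod (embR R S)).rng_eq,
      ((embR R S).mprod (embB A B)).rng_eq] at h4
    exact (Sum.inr_injective h4).symm

noncomputable def extφS (φ : PIso ((esys (Cmat A B)).prod (esys (Dmat R S)))
          ((esys (Dmat R S)).prod (esys (Cmat A B)))) : PIso ((esys B).prod (esys S)) ((esys S).prod (esys A)) where
  e := splitR (gφ A B R S φ) (gφ_left A B R S φ) (gφ_right A B R S φ)
  src_eq := by
    intro x
    have h4 := congrArg ((esys (Dmat R S)).prod (esys (Cmat A B))).src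
      (extφS_espec A B R S φ x)
    rw [φ.src_eq, ((embB A B).mprod (embS R S)).src_eq,
      ((embS R S).mprod (embA A B)).src_eq] at h4
    exact (Sum.inr_injective h4).symm
  rng_eq := by
    intro x
    have h4 := congrArg ((esys (Dmat R S)).prod (esys (Cmat A B))).rng
      (extφS_espec A B R S φ x)
    rw [φ.rng_eq, ((embB A B).mprod (embS R S)).rng_eq,
      ((embS R S).mprod (embA A B)).rng_eq] at h4
    exact (Sum.inl_injective h4).symm

variable (k : ℕ)

noncomputable def gψ
    (ψ : PIso ((esys (Dmat R S)).pow 2) ((esys (Cmat A B)).pow (k + 1))) :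
    (((esys R).prod (esys S)).E ⊕ ((esys S).prod (esys R)).E) ≃
      (((esys A).pow (k + 1)).E ⊕ ((esys B).pow (k + 1)).E) :=
  (eDD R S).trans (ψ.e.trans (ePowC A B (k + 1)).symm)

theorem gψ_left (ψ) (x : ((esys R).prod (esys S)).E) :
    ((gψ A B R S k ψ) (Sum.inl x)).isLeft := by
  rcases hy : (gψ A B R S k ψ) (Sum.inl x) with y | y
  · rfl
  · exfalso
    have h2 : (ePowC A B (k + 1)).symm (ψ.e (((embR R S).mprod (embS R S)).map x))
        = Sum.inr y := hy
    have h3 := congrArg (ePowC A B (k + 1)) h2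
    rw [Equiv.apply_symm_apply] at h3
    have h1 : ψ.e (((embR R S).mprod (embS R S)).map x)
        = ((embB A B).mpow (k + 1)).map y := h3
    have h4 := congrArg ((esys (Cmat A B)).pow (k + 1)).src h1
    erw [ψ.src_eq, ((embB A B).mpow (k + 1)).src_eq] at h4
    have h5 : ((esys (Dmat R S)).pow 2).src (((embR R S).mprod (embS R S)).map x)
        = Sum.inl (((esys R).prod (esys S)).src x) :=
      ((embR R S).mprod (embS R S)).src_eq x
    rw [h5] at h4
    simp at h4

theorem gψ_right (ψ) (x : ((esys S).prod (esys R)).E) :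
    ((gψ A B R S k ψ) (Sum.inr x)).isRight := by
  rcases hy : (gψ A B R S k ψ) (Sum.inr x) with y | y
  · exfalso
    have h2 : (ePowC A B (k + 1)).symm (ψ.e (((embS R S).mprod (embR R S)).map x))
        = Sum.inl y := hy
    have h3 := congrArg (ePowC A B (k + 1)) h2
    rw [Equiv.apply_symm_apply] at h3
    have h1 : ψ.e (((embS R S).mprod (embR R S)).map x)
        = ((embA A B).mpow (k + 1)).map y := h3
    have h4 := congrArg ((esys (Cmat A B)).pow (k + 1)).src h1
    erw [ψ.src_eq, ((embA A B).mpow (k + 1)).src_eq] at h4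
    have h5 : ((esys (Dmat R S)).pow 2).src (((embS R S).mprod (embR R S)).map x)
        = Sum.inr (((esys S).prod (esys R)).src x) :=
      ((embS R S).mprod (embR R S)).src_eq x
    rw [h5] at h4
    simp at h4
  · rfl

theorem extψA_espec (ψ) (x : ((esys R).prod (esys S)).E) :
    ψ.e (((embR R S).mprod (embS R S)).map x)
      = ((embA A B).mpow (k + 1)).map
          (splitL (gψ A B R S k ψ) (gψ_left A B R S k ψ) (gψ_right A B R S k ψ) x) := by
  have h2 : (ePowC A B (k + 1)).symm (ψ.e (((embR R S).mprod (embS R S)).map x))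
      = Sum.inl (splitL (gψ A B R S k ψ) (gψ_left A B R S k ψ) (gψ_right A B R S k ψ) x) :=
    splitL_spec (gψ A B R S k ψ) (gψ_left A B R S k ψ) (gψ_right A B R S k ψ) x
  have h3 := congrArg (ePowC A B (k + 1)) h2
  rw [Equiv.apply_symm_apply] at h3
  exact h3

theorem extψB_espec (ψ) (x : ((esys S).prod (esys R)).E) :
    ψ.e (((embS R S).mprod (embR R S)).map x)
      = ((embB A B).mpow (k + 1)).map
          (splitR (gψ A B R S k ψ) (gψ_left A B R S k ψ) (gψ_right A B R S k ψ) x) := by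
  have h2 : (ePowC A B (k + 1)).symm (ψ.e (((embS R S).mprod (embR R S)).map x))
      = Sum.inr (splitR (gψ A B R S k ψ) (gψ_left A B R S k ψ) (gψ_right A B R S k ψ) x) :=
    splitR_spec (gψ A B R S k ψ) (gψ_left A B R S k ψ) (gψ_right A B R S k ψ) x
  have h3 := congrArg (ePowC A B (k + 1)) h2
  rw [Equiv.apply_symm_apply] at h3
  exact h3

noncomputable def extψA (ψ : PIso ((esys (Dmat R S)).pow 2) ((esys (Cmat A B)).pow (k + 1))) : PIso ((esys R).prod (esys S)) ((esys A).pow (k + 1)) where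
  e := splitL (gψ A B R S k ψ) (gψ_left A B R S k ψ) (gψ_right A B R S k ψ)
  src_eq := by
    intro x
    have h4 := congrArg ((esys (Cmat A B)).pow (k + 1)).src (extψA_espec A B R S k ψ x)
    erw [ψ.src_eq, ((embA A B).mpow (k + 1)).src_eq] at h4
    have h5 : ((esys (Dmat R S)).pow 2).src (((embR R S).mprod (embS R S)).map x)
        = Sum.inl (((esys R).prod (esys S)).src x) :=
      ((embR R S).mprod (embS R S)).src_eq x
    rw [h5] at h4
    exact (Sum.inl_injective h4).symm
  rng_eq := by
    intro x
    have h4 := congrArg ((esys (Cmat A B)).pow (k + 1)).rng (extψA_espec A B R S k ψ x)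
    erw [ψ.rng_eq, ((embA A B).mpow (k + 1)).rng_eq] at h4
    have h5 : ((esys (Dmat R S)).pow 2).rng (((embR R S).mprod (embS R S)).map x)
        = Sum.inl (((esys R).prod (esys S)).rng x) :=
      ((embR R S).mprod (embS R S)).rng_eq x
    rw [h5] at h4
    exact (Sum.inl_injective h4).symm

noncomputable def extψB (ψ : PIso ((esys (Dmat R S)).pow 2) ((esys (Cmat A B)).pow (k + 1))) : PIso ((esys S).prod (esys R)) ((esys B).pow (k + 1)) where
  e := splitR (gψ A B R S k ψ) (gψ_left A B R S k ψ) (gψ_right A B R S k ψ)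
  src_eq := by
    intro x
    have h4 := congrArg ((esys (Cmat A B)).pow (k + 1)).src (extψB_espec A B R S k ψ x)
    erw [ψ.src_eq, ((embB A B).mpow (k + 1)).src_eq] at h4
    have h5 : ((esys (Dmat R S)).pow 2).src (((embS R S).mprod (embR R S)).map x)
        = Sum.inr (((esys S).prod (esys R)).src x) :=
      ((embS R S).mprod (embR R S)).src_eq x
    rw [h5] at h4
    exact (Sum.inr_injective h4).symm
  rng_eq := by
    intro x
    have h4 := congrArg ((esys (Cmat A B)).pow (k + 1)).rng (extψB_espec A B R S k ψ x)
    erw [ψ.rng_eq, ((embB A B).mpow (k + 1)).rng_eq] at h4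
    have h5 : ((esys (Dmat R S)).pow 2).rng (((embS R S).mprod (embR R S)).map x)
        = Sum.inr (((esys S).prod (esys R)).rng x) :=
      ((embS R S).mprod (embR R S)).rng_eq x
    rw [h5] at h4
    exact (Sum.inr_injective h4).symm

end Ext
/-- if `φ : E_C × E_D → E_D × E_C` has components `(φ_R, φ_S)`
and `ψ : E_D² → E_C^m` has components `(ψ_A, ψ_B)` (with `m = k + 1`), then the
single compatibility condition `φ^(m) = (id_D × ψ) ∘ (ψ⁻¹ × id_D)` holds if and
only if both componentwise compatibility conditions hold.  Hence `A` and `B`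
are compatibly shift equivalent with lag `m` via `R` and `S` if and only if
there exist `φ` and `ψ` satisfying the combined condition. -/
theorem combined_compatibility_iff {V W : Type}
    (A : Matrix V V ℕ) (B : Matrix W W ℕ)
    (R : Matrix V W ℕ) (S : Matrix W V ℕ) (k : ℕ) :
    (∀ (φ : PIso ((esys (Cmat A B)).prod (esys (Dmat R S)))
              ((esys (Dmat R S)).prod (esys (Cmat A B))))
       (ψ : PIso ((esys (Dmat R S)).pow 2) ((esys (Cmat A B)).pow (k + 1)))
       (φR : PIso ((esys A).prod (esys R)) ((esys R).prod (esys B)))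
       (φS : PIso ((esys B).prod (esys S)) ((esys S).prod (esys A)))
       (ψA : PIso ((esys R).prod (esys S)) ((esys A).pow (k + 1)))
       (ψB : PIso ((esys S).prod (esys R)) ((esys B).pow (k + 1))),
      (∀ x, φ.e (((embA A B).mprod (embR R S)).map x) =
            ((embR R S).mprod (embB A B)).map (φR.e x)) →
      (∀ x, φ.e (((embB A B).mprod (embS R S)).map x) =
            ((embS R S).mprod (embA A B)).map (φS.e x)) →
      (∀ x, ψ.e (((embR R S).mprod (embS R S)).map x) =
            ((embA A B).mpow (k + 1)).map (ψA.e x)) →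
      (∀ x, ψ.e (((embS R S).mprod (embR R S)).map x) =
            ((embB A B).mpow (k + 1)).map (ψB.e x)) →
      (CombinedCompat A B R S k φ ψ ↔
        (φR.iter k =
          (ψA.symm.hprod (PIso.refl (esys R))).trans
            ((EdgeSys.assoc (esys R) (esys S) (esys R)).trans
              ((PIso.refl (esys R)).hprod ψB)) ∧
         φS.iter k =
          (ψB.symm.hprod (PIso.refl (esys S))).trans
            ((EdgeSys.assoc (esys S) (esys R) (esys S)).trans
              ((PIso.refl (esys S)).hprod ψA))))) ∧
    (Nonempty (CompatSE A B R S k) ↔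
      ∃ (φ : PIso ((esys (Cmat A B)).prod (esys (Dmat R S)))
               ((esys (Dmat R S)).prod (esys (Cmat A B))))
        (ψ : PIso ((esys (Dmat R S)).pow 2) ((esys (Cmat A B)).pow (k + 1))),
        CombinedCompat A B R S k φ ψ) := by
  constructor
  · intro φ ψ φR φS ψA ψB h1 h2 h3 h4
    exact part1 A B R S k φ ψ φR φS ψA ψB h1 h2 h3 h4
  · constructor
    · rintro ⟨c⟩
      refine ⟨mkφ A B R S c.φR c.φS, mkψ A B R S k c.ψA c.ψB, ?_⟩
      exact (part1 A B R S k (mkφ A B R S c.φR c.φS) (mkψ A B R S k c.ψA c.ψB)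
        c.φR c.φS c.ψA c.ψB
        (mkφe_specA A B R S c.φR c.φS) (mkφe_specB A B R S c.φR c.φS)
        (mkψe_specA A B R S k c.ψA c.ψB) (mkψe_specB A B R S k c.ψA c.ψB)).mpr
        ⟨c.compatR, c.compatS⟩
    · rintro ⟨φ, ψ, hcomb⟩
      have h := (part1 A B R S k φ ψ (extφR A B R S φ) (extφS A B R S φ)
        (extψA A B R S k ψ) (extψB A B R S k ψ)
        (extφR_espec A B R S φ) (extφS_espec A B R S φ)
        (extψA_espec A B R S k ψ) (extψB_espec A B R S k ψ)).mp hcomb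
      exact ⟨⟨extφR A B R S φ, extφS A B R S φ, extψA A B R S k ψ, extψB A B R S k ψ,
        h.1, h.2⟩⟩
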